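/- Let R be an elliptic root system belonging to (F,I). Then the set S := {c ∈ ℝ | c ≠ 0, the form cI is positive semi-definite on F, and cI(x,x) ∈ 2ℤ for every x ∈ Q(R)} is nonempty and contains a unique element of smallest absolute value (this element is denoted (I_R : I)). -/

import Mathlib

open scoped TensorProduct

/-- The radical `{x | I(x,y) = 0 for all y}` of a bilinear form. -/
def bilinRadical {V : Type*} [AddCommGroup V] [Module ℝ V]
    (I : V →ₗ[ℝ] V →ₗ[ℝ] ℝ) : Submodule ℝ V where
  carrier := {x | ∀ y, I x y = 0}
  add_mem' {a b} ha hb := by intro y; simp [ha y, hb y]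
  zero_mem' := by intro y; simp
  smul_mem' c x hx := by intro y; simp [hx y]

/-- The coroot `α^∨ = 2α / I(α,α)` of a non-isotropic vector `α`. -/
noncomputable def coroot {V : Type*} [AddCommGroup V] [Module ℝ V]
    (I : V →ₗ[ℝ] V →ₗ[ℝ] ℝ) (α : V) : V := (2 / I α α) • α

/-- The contraction map `F ⊗_ℤ ℝ → F`, `x ⊗ r ↦ r • x`. -/
noncomputable def smulContract {V : Type*} [AddCommGroup V] [Module ℝ V] :
    (V ⊗[ℤ] ℝ) →ₗ[ℤ] V :=
  TensorProduct.lift (LinearMap.mk₂ ℤ (fun (x : V) (r : ℝ) => r • x)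
    (fun x y r => smul_add r x y)
    (fun c x r => (smul_comm c r x).symm)
    (fun x r s => add_smul r s x)
    (fun c x r => smul_assoc c r x))

/-- The natural map `Q ⊗_ℤ ℝ → F` induced by the inclusion of an additive subgroup
`Q` of a real vector space `F`. -/
noncomputable def latticeMap {V : Type*} [AddCommGroup V] [Module ℝ V]
    (Q : AddSubgroup V) : (↥Q ⊗[ℤ] ℝ) →ₗ[ℤ] V :=
  smulContract.comp (TensorProduct.map Q.subtype.toIntLinearMap LinearMap.id)

section Aux
variable {F : Type*} [AddCommGroup F] [Module ℝ F]

private lemma cs_pos (I : F →ₗ[ℝ] F →ₗ[ℝ] ℝ) (hsymm : ∀ x y, I x y = I y x)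
    (hpos : ∀ x, 0 ≤ I x x) (α β : F) (hβ : I β β ≠ 0) :
    (I α β)^2 ≤ I α α * I β β := by
  have hb : 0 < I β β := lt_of_le_of_ne (hpos β) (Ne.symm hβ)
  have key := hpos (I β β • α - I α β • β)
  simp only [map_sub, map_smul, LinearMap.sub_apply, LinearMap.smul_apply, smul_eq_mul] at key
  rw [← hsymm α β] at key
  nlinarith [key, hb]

private lemma cs (I : F →ₗ[ℝ] F →ₗ[ℝ] ℝ) (hsymm : ∀ x y, I x y = I y x)
    (hsemi : (∀ x, 0 ≤ I x x) ∨ (∀ x, I x x ≤ 0)) (α β : F) (hβ : I β β ≠ 0) :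
    (I α β)^2 ≤ I α α * I β β := by
  rcases hsemi with h | h
  · exact cs_pos I hsymm h α β hβ
  · have h2 := cs_pos (-I) (fun x y => by simp [hsymm x y])
      (fun x => by simpa using h x) α β (by simpa using hβ)
    simp only [LinearMap.neg_apply, neg_neg, neg_mul_neg, neg_sq] at h2
    exact h2

end Aux

set_option maxHeartbeats 2000000 in
/-- For an elliptic root system `R` belonging to `(F,I)`, the set
`S = {c ≠ 0 | cI is positive semi-definite and cI(x,x) ∈ 2ℤ on Q(R)}`
is nonempty and has a unique element of smallest absolute value,
denoted `(I_R : I)`. -/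
theorem exists_unique_normalization_constant
    {F : Type*} [AddCommGroup F] [Module ℝ F] [FiniteDimensional ℝ F]
    (l : ℕ) (hl : 1 ≤ l) (hdim : Module.finrank ℝ F = l + 2)
    (I : F →ₗ[ℝ] F →ₗ[ℝ] ℝ)
    (hsymm : ∀ x y, I x y = I y x)
    (hsemi : (∀ x, 0 ≤ I x x) ∨ (∀ x, I x x ≤ 0))
    (hrad : Module.finrank ℝ ↥(bilinRadical I) = 2)
    (R : Set F)
    (hniso : ∀ α ∈ R, I α α ≠ 0)
    (hfull : Function.Bijective (latticeMap (AddSubgroup.closure R)))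
    (hint : ∀ α ∈ R, ∀ β ∈ R, ∃ n : ℤ, I α (coroot I β) = n)
    (hrefl : ∀ α ∈ R, (fun u => u - (I u (coroot I α)) • α) '' R = R)
    (hirr : ∀ R₁ R₂ : Set F, R = R₁ ∪ R₂ →
      (∀ x ∈ R₁, ∀ y ∈ R₂, I x y = 0) → R₁ = ∅ ∨ R₂ = ∅)
    (S : Set ℝ)
    (hS : S = {c : ℝ | c ≠ 0 ∧ (∀ x : F, 0 ≤ c * I x x) ∧
      (∀ x ∈ AddSubgroup.closure R, ∃ n : ℤ, c * I x x = 2 * n)}) :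
    S.Nonempty ∧
    ∃ c₀ ∈ S, (∀ c ∈ S, |c₀| ≤ |c|) ∧ (∀ c ∈ S, |c| = |c₀| → c = c₀) := by
  classical
  -- R is nonempty
  have hR : R.Nonempty := by
    by_contra hne
    rw [Set.not_nonempty_iff_eq_empty] at hne
    subst hne
    have h0 : ∀ t : ↥(AddSubgroup.closure (∅ : Set F)) ⊗[ℤ] ℝ,
        latticeMap (AddSubgroup.closure (∅ : Set F)) t = 0 := by
      intro t
      induction t using TensorProduct.induction_on with
      | zero => simp
      | tmul q r =>
          obtain ⟨v, hv⟩ := q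
          rw [AddSubgroup.closure_empty, AddSubgroup.mem_bot] at hv
          subst hv
          simp [latticeMap, smulContract]
          rw [show (⟨0, hv⟩ : ↥(AddSubgroup.closure (∅ : Set F))) = 0 from rfl,
            TensorProduct.zero_tmul, map_zero]
      | add x y hx hy => rw [map_add, hx, hy, add_zero]
    have hnt : Nontrivial F := Module.nontrivial_of_finrank_pos (R := ℝ) (by omega)
    obtain ⟨x, hx⟩ := exists_ne (0 : F)
    obtain ⟨t, ht⟩ := hfull.2 x
    exact hx (ht ▸ h0 t)
  obtain ⟨α₀, hα₀⟩ := hR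
  have hA : I α₀ α₀ ≠ 0 := hniso α₀ hα₀
  -- norms of roots have the same sign
  have hprod : ∀ a ∈ R, ∀ b ∈ R, 0 < I a a * I b b := by
    intro a ha b hb
    rcases hsemi with h | h
    · exact mul_pos (lt_of_le_of_ne (h a) (Ne.symm (hniso a ha)))
        (lt_of_le_of_ne (h b) (Ne.symm (hniso b hb)))
    · exact mul_pos_of_neg_of_neg (lt_of_le_of_ne (h a) (hniso a ha))
        (lt_of_le_of_ne (h b) (hniso b hb))
  -- connectivity
  set adj : F → F → Prop := fun a b => b ∈ R ∧ I a b ≠ 0 with hadj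
  have hconn : ∀ β ∈ R, Relation.ReflTransGen adj α₀ β := by
    intro β hβ
    by_contra hc
    have hsplit := hirr {x ∈ R | Relation.ReflTransGen adj α₀ x}
      {x ∈ R | ¬ Relation.ReflTransGen adj α₀ x} ?_ ?_
    · rcases hsplit with h | h
      · have hmem : α₀ ∈ {x ∈ R | Relation.ReflTransGen adj α₀ x} :=
          ⟨hα₀, Relation.ReflTransGen.refl⟩
        rw [h] at hmem; exact hmem
      · have hmem : β ∈ {x ∈ R | ¬ Relation.ReflTransGen adj α₀ x} := ⟨hβ, hc⟩
        rw [h] at hmem; exact hmem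
    · ext x
      constructor
      · intro hx
        by_cases hcx : Relation.ReflTransGen adj α₀ x
        · exact Or.inl ⟨hx, hcx⟩
        · exact Or.inr ⟨hx, hcx⟩
      · rintro (⟨hx, -⟩ | ⟨hx, -⟩) <;> exact hx
    · rintro x ⟨hxR, hx⟩ y ⟨hyR, hy⟩
      by_contra hxy
      exact hy (hx.tail ⟨hyR, hxy⟩)
  -- every norm is realized by a root non-orthogonal to α₀
  have hD : ∀ β ∈ R, ∀ a, Relation.ReflTransGen adj a β → a ∈ R →
      ∃ β', β' ∈ R ∧ I β' β' = I β β ∧ I a β' ≠ 0 := by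
    intro β hβ a h
    induction h using Relation.ReflTransGen.head_induction_on with
    | refl => intro _; exact ⟨β, hβ, rfl, hniso β hβ⟩
    | @head a c h' hrest ih =>
        intro haR
        obtain ⟨hcR, hac⟩ := h'
        obtain ⟨β₁, hβ₁R, hβ₁n, hcβ₁⟩ := ih hcR
        by_cases hzero : I a β₁ = 0
        · have hcc : I c c ≠ 0 := hniso c hcR
          have hβ₁c : I β₁ c ≠ 0 := by rw [hsymm β₁ c]; exact hcβ₁
          refine ⟨β₁ - (I β₁ (coroot I c)) • c, ?_, ?_, ?_⟩
          · rw [← hrefl c hcR]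
            exact ⟨β₁, hβ₁R, rfl⟩
          · simp only [coroot, map_sub, map_smul, LinearMap.sub_apply,
              LinearMap.smul_apply, smul_eq_mul]
            rw [← hβ₁n, hsymm c β₁]
            field_simp
            ring
          · have hval : I a (β₁ - (I β₁ (coroot I c)) • c)
                = -((2 / I c c) * I β₁ c * I a c) := by
              simp only [coroot, map_sub, map_smul, LinearMap.sub_apply,
                LinearMap.smul_apply, smul_eq_mul]
              rw [hzero]; ring
            rw [hval]
            exact neg_ne_zero.mpr (mul_ne_zero
              (mul_ne_zero (div_ne_zero two_ne_zero hcc) hβ₁c) hac)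
        · exact ⟨β₁, hβ₁R, hβ₁n, hzero⟩
  have hD' : ∀ β ∈ R, ∃ β', β' ∈ R ∧ I β' β' = I β β ∧ I α₀ β' ≠ 0 :=
    fun β hβ => hD β hβ α₀ (hconn β hβ) hα₀
  -- key integrality claim on root norms
  have claim1 : ∀ β ∈ R, ∃ k : ℤ, 24 * I β β = 2 * k * I α₀ α₀ := by
    intro β hβ
    obtain ⟨β', hβ'R, hnorm, hne⟩ := hD' β hβ
    obtain ⟨n, hn⟩ := hint α₀ hα₀ β' hβ'R
    obtain ⟨m, hm⟩ := hint β' hβ'R α₀ hα₀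
    have hB : I β' β' ≠ 0 := hniso β' hβ'R
    simp only [coroot, map_smul, smul_eq_mul] at hn hm
    have hn' : 2 * I α₀ β' = (n : ℝ) * I β' β' := by rw [← hn]; field_simp
    have hm' : 2 * I α₀ β' = (m : ℝ) * I α₀ α₀ := by
      rw [hsymm α₀ β', ← hm]; field_simp
    have hn0 : n ≠ 0 := by
      rintro rfl
      simp only [Int.cast_zero, zero_mul] at hn'
      exact hne (by linarith)
    have hm0 : m ≠ 0 := by
      rintro rfl
      simp only [Int.cast_zero, zero_mul] at hm'
      exact hne (by linarith)
    have hnb : (n : ℝ) * I β' β' = (m : ℝ) * I α₀ α₀ := hn'.symm.trans hm'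
    have hBA : 0 < I β' β' * I α₀ α₀ := hprod β' hβ'R α₀ hα₀
    have hp2 : 0 < I α₀ β' ^ 2 :=
      lt_of_le_of_ne (sq_nonneg _) (Ne.symm (pow_ne_zero 2 hne))
    have hnm_real : (n : ℝ) * m * (I β' β' * I α₀ α₀) = 4 * I α₀ β' ^ 2 := by
      linear_combination (-(m : ℝ) * I α₀ α₀) * hn' + (-(2 * I α₀ β')) * hm'
    have hnm_pos : (0 : ℝ) < (n : ℝ) * m := by nlinarith [hnm_real, hBA, hp2]
    have hcs := cs I hsymm hsemi α₀ β' hB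
    have hnm_le : ((n : ℝ)) * m ≤ 4 := by nlinarith [hnm_real, hcs, hBA]
    have hb1 : 1 ≤ n * m := by
      have : (0 : ℝ) < ((n * m : ℤ) : ℝ) := by push_cast; exact hnm_pos
      have := (by exact_mod_cast this : (0 : ℤ) < n * m)
      omega
    have hb2 : n * m ≤ 4 := by
      have : ((n * m : ℤ) : ℝ) ≤ 4 := by push_cast; exact hnm_le
      exact_mod_cast this
    have hdvd : n ∣ 12 := by
      rcases lt_or_gt_of_ne hn0 with hn1 | hn1
      · rcases lt_or_gt_of_ne hm0 with hm1 | hm1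
        · have h4 : -4 ≤ n := by nlinarith
          have h5 : n ≤ -1 := by omega
          interval_cases n <;> decide
        · nlinarith
      · rcases lt_or_gt_of_ne hm0 with hm1 | hm1
        · nlinarith
        · have h4 : n ≤ 4 := by nlinarith
          have h5 : 1 ≤ n := by omega
          interval_cases n <;> decide
    obtain ⟨q, hq⟩ := hdvd
    have hq_real : (12 : ℝ) = (n : ℝ) * q := by exact_mod_cast hq
    refine ⟨q * m, ?_⟩
    rw [← hnorm]
    push_cast
    linear_combination (2 * (q : ℝ)) * hnb + (2 * I β' β') * hq_real
  -- pairings are integral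
  have claimInt : ∀ α ∈ R, ∀ β ∈ R, ∃ p : ℤ, 24 * I α β = p * I α₀ α₀ := by
    intro α hα β hβ
    obtain ⟨k, hk⟩ := claim1 β hβ
    obtain ⟨n, hn⟩ := hint α hα β hβ
    have hB : I β β ≠ 0 := hniso β hβ
    simp only [coroot, map_smul, smul_eq_mul] at hn
    have hn' : 2 * I α β = (n : ℝ) * I β β := by rw [← hn]; field_simp
    refine ⟨k * n, ?_⟩
    push_cast
    linear_combination 12 * hn' + ((n : ℝ) / 2) * hk
  -- the whole lattice
  have claim2 : ∀ x ∈ AddSubgroup.closure R,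
      (∃ k : ℤ, 24 * I x x = 2 * k * I α₀ α₀) ∧
      (∀ y ∈ AddSubgroup.closure R, ∃ p : ℤ, 24 * I x y = p * I α₀ α₀) := by
    have hA1 : ∀ α ∈ R, ∀ y ∈ AddSubgroup.closure R,
        ∃ p : ℤ, 24 * I α y = p * I α₀ α₀ := by
      intro α hα y hy
      refine AddSubgroup.closure_induction
        (p := fun y _ => ∃ p : ℤ, 24 * I α y = ↑p * I α₀ α₀) ?_ ?_ ?_ ?_ hy
      · exact fun z hz => claimInt α hα z hz
      · exact ⟨0, by simp⟩
      · rintro y' z - - ⟨p, hp⟩ ⟨p', hp'⟩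
        exact ⟨p + p', by rw [map_add]; push_cast; linarith⟩
      · rintro y' - ⟨p, hp⟩
        exact ⟨-p, by rw [map_neg]; push_cast; linarith⟩
    intro x hx
    refine AddSubgroup.closure_induction
      (p := fun x _ => (∃ k : ℤ, 24 * I x x = 2 * ↑k * I α₀ α₀) ∧
        (∀ y ∈ AddSubgroup.closure R, ∃ p : ℤ, 24 * I x y = ↑p * I α₀ α₀)) ?_ ?_ ?_ ?_ hx
    · exact fun z hz => ⟨claim1 z hz, hA1 z hz⟩
    · exact ⟨⟨0, by simp⟩, fun y hy => ⟨0, by simp⟩⟩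
    · rintro x' y hx' hy ⟨⟨k1, hk1⟩, hx2⟩ ⟨⟨k2, hk2⟩, hy2⟩
      constructor
      · obtain ⟨p, hp⟩ := hx2 y hy
        refine ⟨k1 + k2 + p, ?_⟩
        simp only [map_add, LinearMap.add_apply]
        have hyx : I y x' = I x' y := hsymm y x'
        push_cast
        linarith
      · intro z hz
        obtain ⟨p1, hp1⟩ := hx2 z hz
        obtain ⟨p2, hp2⟩ := hy2 z hz
        exact ⟨p1 + p2, by simp only [map_add, LinearMap.add_apply]; push_cast; linarith⟩
    · rintro x' hx' ⟨⟨k, hk⟩, hx2⟩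
      constructor
      · exact ⟨k, by simp only [map_neg, LinearMap.neg_apply, neg_neg, mul_neg, neg_mul]; push_cast; linarith⟩
      · intro z hz
        obtain ⟨p, hp⟩ := hx2 z hz
        exact ⟨-p, by simp only [map_neg, LinearMap.neg_apply, mul_neg, neg_mul]; push_cast; linarith⟩
  -- the candidate element of S
  have hcS : (24 / I α₀ α₀) ∈ S := by
    rw [hS]
    refine ⟨div_ne_zero (by norm_num) hA, ?_, ?_⟩
    · intro x
      rcases hsemi with h | h
      · have hA' : 0 < I α₀ α₀ := lt_of_le_of_ne (h α₀) (Ne.symm hA)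
        exact mul_nonneg (le_of_lt (by positivity)) (h x)
      · have hA' : I α₀ α₀ < 0 := lt_of_le_of_ne (h α₀) hA
        nlinarith [div_neg_of_pos_of_neg (show (0:ℝ) < 24 by norm_num) hA', h x]
    · intro x hx
      obtain ⟨k, hk⟩ := (claim2 x hx).1
      refine ⟨k, ?_⟩
      rw [div_mul_eq_mul_div, div_eq_iff hA]
      linarith
  -- every element of S corresponds to a positive integer
  have hmem : ∀ c ∈ S, ∃ k : ℤ, 1 ≤ k ∧ c * I α₀ α₀ = 2 * k := by
    intro c hc
    rw [hS] at hc
    obtain ⟨hc0, hcpos, hcint⟩ := hc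
    obtain ⟨k, hk⟩ := hcint α₀ (AddSubgroup.subset_closure hα₀)
    refine ⟨k, ?_, hk⟩
    have h1 : 0 < c * I α₀ α₀ :=
      lt_of_le_of_ne (hcpos α₀) (Ne.symm (mul_ne_zero hc0 hA))
    rw [hk] at h1
    have h2 : (0 : ℝ) < (k : ℝ) := by linarith
    have h3 : (0 : ℤ) < k := by exact_mod_cast h2
    omega
  have hSne : S.Nonempty := ⟨_, hcS⟩
  refine ⟨hSne, ?_⟩
  -- find the minimum
  obtain ⟨kc, hkc1, hkc⟩ := hmem _ hcS
  have hKne : ({j : ℕ | ∃ c ∈ S, c * I α₀ α₀ = 2 * j} : Set ℕ).Nonempty := by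
    refine ⟨kc.toNat, 24 / I α₀ α₀, hcS, ?_⟩
    rw [hkc]
    congr 1
    exact_mod_cast (Int.toNat_of_nonneg (by omega)).symm
  obtain ⟨k₀, ⟨c₀, hc₀S, hc₀⟩, hmin⟩ :=
    Nat.lt_wfRel.wf.has_min {j : ℕ | ∃ c ∈ S, c * I α₀ α₀ = 2 * j} hKne
  have hAabs : 0 < |I α₀ α₀| := abs_pos.mpr hA
  have hk₀pos : 1 ≤ k₀ := by
    obtain ⟨k', hk'1, hk'⟩ := hmem c₀ hc₀S
    have : (2 : ℝ) * k₀ = 2 * k' := by rw [← hc₀, hk']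
    have h2 : ((k₀ : ℤ) : ℝ) = (k' : ℝ) := by push_cast at this ⊢; linarith
    have h3 : (k₀ : ℤ) = k' := by exact_mod_cast h2
    omega
  have hc₀pos : 0 < c₀ * I α₀ α₀ := by
    rw [hc₀]
    have : (1 : ℝ) ≤ (k₀ : ℝ) := by exact_mod_cast hk₀pos
    linarith
  have habs : ∀ c ∈ S, ∀ k : ℤ, c * I α₀ α₀ = 2 * k → |c| * |I α₀ α₀| = 2 * k ∧ 0 ≤ (k:ℝ) := by
    intro c hc k hk
    obtain ⟨k', hk'1, hk'⟩ := hmem c hc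
    have hkk : (k : ℝ) = (k' : ℝ) := by rw [hk] at hk'; linarith
    have hpos : 0 < c * I α₀ α₀ := by
      rw [hk, hkk]
      have : (1:ℝ) ≤ (k' : ℝ) := by exact_mod_cast hk'1
      linarith
    constructor
    · rw [← abs_mul, abs_of_pos hpos, hk]
    · rw [hkk]; positivity
  refine ⟨c₀, hc₀S, ?_, ?_⟩
  · intro c hc
    obtain ⟨k, hk1, hk⟩ := hmem c hc
    have hKmem : k.toNat ∈ {j : ℕ | ∃ c ∈ S, c * I α₀ α₀ = 2 * j} := by
      refine ⟨c, hc, ?_⟩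
      rw [hk]
      congr 1
      exact_mod_cast (Int.toNat_of_nonneg (by omega)).symm
    have hle : k₀ ≤ k.toNat := not_lt.mp (hmin _ hKmem)
    obtain ⟨habs1, -⟩ := habs c hc k hk
    obtain ⟨habs0, -⟩ := habs c₀ hc₀S k₀ hc₀
    have hlr : (k₀ : ℝ) ≤ (k : ℝ) := by
      have : ((k₀ : ℤ)) ≤ k := by omega
      exact_mod_cast this
    have : |c₀| * |I α₀ α₀| ≤ |c| * |I α₀ α₀| := by
      rw [habs0, habs1]; push_cast; linarith
    exact le_of_mul_le_mul_right this hAabs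
  · intro c hc hceq
    obtain ⟨k, hk1, hk⟩ := hmem c hc
    have hpos : 0 < c * I α₀ α₀ := by
      rw [hk]
      have : (1:ℝ) ≤ (k:ℝ) := by exact_mod_cast hk1
      linarith
    have h1 : c * I α₀ α₀ = |c * I α₀ α₀| := (abs_of_pos hpos).symm
    have h2 : c₀ * I α₀ α₀ = |c₀ * I α₀ α₀| := (abs_of_pos hc₀pos).symm
    have h3 : c * I α₀ α₀ = c₀ * I α₀ α₀ := by
      rw [h1, h2, abs_mul, abs_mul, hceq]
    exact mul_right_cancel₀ hA h3
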